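/- Let p* and p̄ be the stationary distributions of the original and perturbed Markov chains with p*_ψ ∝ exp(β Φ_ψ) and, in the perturbed chain, each Φ_ψ replaced by a value in [Φ_ψ − Δ_max, Φ_ψ + Δ_max]. If p̄_ψ ∝ exp(β Φ̄_ψ) with |Φ̄_ψ − Φ_ψ| ≤ Δ_max for all ψ, then the total variation distance d_TV(p*, p̄) = (1/2)∑_ψ |p*_ψ − p̄_ψ| is at most 1 − exp(−2β Δ_max). -/

import Mathlib

/-- If `p*_ψ ∝ exp(β Φ_ψ)` and `p̄_ψ ∝ exp(β Φ̄_ψ)` with `|Φ̄_ψ - Φ_ψ| ≤ Δ_max` for all `ψ`,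
then the total variation distance `d_TV(p*, p̄) = (1/2) ∑_ψ |p*_ψ - p̄_ψ|` is at most
`1 - exp(-2 β Δ_max)`. -/
theorem perturbed_gibbs_tv_bound {T : Type*} [Fintype T] [Nonempty T]
    (β Δmax : ℝ) (hβ : 0 < β) (Φ Φbar : T → ℝ)
    (hΔ : ∀ ψ, |Φbar ψ - Φ ψ| ≤ Δmax)
    (p pbar : T → ℝ)
    (hp : ∀ ψ, p ψ = Real.exp (β * Φ ψ) / ∑ σ : T, Real.exp (β * Φ σ))
    (hpbar : ∀ ψ, pbar ψ = Real.exp (β * Φbar ψ) / ∑ σ : T, Real.exp (β * Φbar σ)) :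
    (1 / 2) * ∑ ψ : T, |p ψ - pbar ψ| ≤ 1 - Real.exp (-2 * β * Δmax) := by
  set S : ℝ := ∑ σ : T, Real.exp (β * Φ σ) with hS_def
  set Sb : ℝ := ∑ σ : T, Real.exp (β * Φbar σ) with hSb_def
  have hS : 0 < S := Finset.sum_pos (fun i _ => Real.exp_pos _) Finset.univ_nonempty
  have hSb : 0 < Sb := Finset.sum_pos (fun i _ => Real.exp_pos _) Finset.univ_nonempty
  have hΔ0 : 0 ≤ Δmax := le_trans (abs_nonneg _) (hΔ (Classical.arbitrary T))
  set c : ℝ := Real.exp (-2 * β * Δmax) with hc_def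
  have hc1 : c ≤ 1 := Real.exp_le_one_iff.mpr (by nlinarith)
  have hc0 : 0 < c := Real.exp_pos _
  have hp_nonneg : ∀ ψ, 0 ≤ p ψ := fun ψ => by
    rw [hp]; positivity
  have hpsum : ∑ ψ : T, p ψ = 1 := by
    simp only [hp]
    rw [← Finset.sum_div, ← hS_def, div_self hS.ne']
  have hpbarsum : ∑ ψ : T, pbar ψ = 1 := by
    simp only [hpbar]
    rw [← Finset.sum_div, ← hSb_def, div_self hSb.ne']
  -- Sb ≤ exp(β Δmax) * S
  have hSb_le : Sb ≤ Real.exp (β * Δmax) * S := by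
    rw [hSb_def, hS_def, Finset.mul_sum]
    refine Finset.sum_le_sum fun σ _ => ?_
    rw [← Real.exp_add]
    apply Real.exp_le_exp.mpr
    have := (abs_le.mp (hΔ σ)).2
    nlinarith
  have hkey : ∀ ψ, c * p ψ ≤ pbar ψ := by
    intro ψ
    rw [hp, hpbar]
    have hnum : Real.exp (-(β * Δmax)) * Real.exp (β * Φ ψ) ≤ Real.exp (β * Φbar ψ) := by
      rw [← Real.exp_add]
      apply Real.exp_le_exp.mpr
      have := (abs_le.mp (hΔ ψ)).1
      nlinarith
    have h1 : c * (Real.exp (β * Φ ψ) / S)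
        = (Real.exp (-(β * Δmax)) * Real.exp (β * Φ ψ)) / (Real.exp (β * Δmax) * S) := by
      rw [hc_def]
      field_simp
      rw [← Real.exp_add]
      congr 1
      ring
    rw [h1]
    exact div_le_div₀ (Real.exp_pos _).le hnum hSb hSb_le
  have habs : ∀ a b : ℝ, |a - b| = a + b - 2 * min a b := by
    intro a b
    rcases le_total a b with h | h
    · rw [abs_of_nonpos (by linarith), min_eq_left h]; ring
    · rw [abs_of_nonneg (by linarith), min_eq_right h]; ring
  have hmin : c ≤ ∑ ψ : T, min (p ψ) (pbar ψ) := by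
    calc c = ∑ ψ : T, c * p ψ := by rw [← Finset.mul_sum, hpsum, mul_one]
    _ ≤ ∑ ψ : T, min (p ψ) (pbar ψ) := by
        refine Finset.sum_le_sum fun ψ _ => le_min ?_ (hkey ψ)
        nlinarith [hp_nonneg ψ]
  have hsum : ∑ ψ : T, |p ψ - pbar ψ| = 2 - 2 * ∑ ψ : T, min (p ψ) (pbar ψ) := by
    simp only [habs]
    rw [Finset.sum_sub_distrib, Finset.sum_add_distrib, hpsum, hpbarsum, ← Finset.mul_sum]
    ring
  rw [hsum]
  linarith
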